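/- In B = ℤ[X]/(X^n − 1) with involution induced by X ↦ X^{n−1}, the only idempotent elements are 0 and 1. -/

import Mathlib

open Polynomial

-- abstract key lemma
lemma key_idem {B : Type*} [CommRing B] (pb : PowerBasis ℤ B)
    (hpos : 0 < pb.dim) (hgen : pb.gen ^ pb.dim = 1) (e : B) (he : e * e = e) :
    e = 0 ∨ pb.basis.repr e ⟨0, hpos⟩ = 1 := by
  haveI : NeZero pb.dim := ⟨hpos.ne'⟩
  set b := pb.basis with hb
  have hzero : (⟨0, hpos⟩ : Fin pb.dim) = 0 := rfl
  rw [hzero]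
  set a : Fin pb.dim → ℤ := fun i => b.repr e i with ha
  -- basis multiplication
  have hbb : ∀ i j : Fin pb.dim, b i * b j = b (i + j) := by
    intro i j
    rw [pb.basis_eq_pow, pb.basis_eq_pow, pb.basis_eq_pow, ← pow_add,
      pow_eq_pow_mod _ hgen]
    congr 1
  set M : Matrix (Fin pb.dim) (Fin pb.dim) ℤ := Algebra.leftMulMatrix b e with hMdef
  have hdiag : ∀ j, M j j = a 0 := by
    intro j
    rw [hMdef, Algebra.leftMulMatrix_eq_repr_mul]
    conv_lhs => rw [← b.sum_repr e, Finset.sum_mul]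
    simp_rw [smul_mul_assoc, hbb, map_sum, map_smul, b.repr_self]
    rw [Finsupp.finset_sum_apply]
    simp_rw [Finsupp.smul_apply, Finsupp.single_apply]
    rw [Finset.sum_eq_single 0]
    · simp [ha]
    · intro i _ hi
      rw [if_neg, smul_zero]
      rw [add_eq_right]
      exact hi
    · simp
  have hMM : M * M = M := by rw [hMdef, ← map_mul, he]
  set Mq : Matrix (Fin pb.dim) (Fin pb.dim) ℚ := M.map (Int.cast : ℤ → ℚ) with hMq
  have hqq : Mq * Mq = Mq := by
    have h := Matrix.map_mul (L := M) (M := M) (f := Int.castRingHom ℚ)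
    rw [hMM] at h
    simpa [hMq] using h.symm
  set f := Matrix.toLin' Mq with hf
  have hff : f ∘ₗ f = f := by
    rw [hf, ← Matrix.toLin'_mul, hqq]
  obtain ⟨p, hp⟩ := (LinearMap.isProj_iff_isIdempotentElem f).mpr hff
  have htr : LinearMap.trace ℚ _ f = (Module.finrank ℚ p : ℚ) := hp.trace
  have htr2 : LinearMap.trace ℚ _ f = (pb.dim : ℚ) * (a 0 : ℚ) := by
    rw [LinearMap.trace_eq_matrix_trace ℚ (Pi.basisFun ℚ (Fin pb.dim)),
      LinearMap.toMatrix_eq_toMatrix', hf, LinearMap.toMatrix'_toLin']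
    rw [Matrix.trace]
    have : ∀ j, Matrix.diag Mq j = (a 0 : ℚ) := by
      intro j
      simp [hMq, Matrix.diag, hdiag j]
    rw [Finset.sum_congr rfl fun j _ => this j, Finset.sum_const]
    simp [mul_comm]
  have hrle : Module.finrank ℚ p ≤ pb.dim := by
    have := Submodule.finrank_le p
    rwa [Module.finrank_fintype_fun_eq_card, Fintype.card_fin] at this
  have heq : (pb.dim : ℤ) * a 0 = (Module.finrank ℚ p : ℤ) := by
    have := htr2.symm.trans htr
    exact_mod_cast this
  have ha0 : a 0 = 0 ∨ a 0 = 1 := by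
    have h1 : (0:ℤ) ≤ (pb.dim : ℤ) * a 0 := by rw [heq]; positivity
    have h2 : (pb.dim : ℤ) * a 0 ≤ pb.dim := by
      rw [heq]; exact_mod_cast hrle
    have h3 : (0:ℤ) < pb.dim := by exact_mod_cast hpos
    rcases le_or_gt (a 0) 0 with h | h
    · left; nlinarith
    · right; nlinarith
  rcases ha0 with h0 | h1
  · left
    -- trace zero: finrank p = 0
    have hr0 : Module.finrank ℚ p = 0 := by
      have : ((Module.finrank ℚ p : ℤ)) = 0 := by rw [← heq, h0, mul_zero]
      exact_mod_cast this
    have hpbot : p = ⊥ := Submodule.finrank_eq_zero.mp hr0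
    have hf0 : f = 0 := by
      apply LinearMap.ext
      intro x
      have hm := hp.map_mem x
      rw [hpbot, Submodule.mem_bot] at hm
      simpa using hm
    have hMq0 : Mq = 0 := by
      have h := LinearMap.toMatrix'_toLin' Mq
      rw [← hf, hf0, map_zero] at h
      exact h.symm
    have hM0 : M = 0 := by
      ext i j
      have h : ((M i j : ℤ) : ℚ) = 0 := by
        have := congrFun (congrFun hMq0 i) j
        simpa [hMq] using this
      exact_mod_cast h
    apply Algebra.leftMulMatrix_injective b
    rw [← hMdef, hM0, map_zero]
  · right; exact h1

/-- In `B = ℤ[X]/(X^n − 1)`, the only idempotents are `0` and `1`. -/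
theorem idempotents_in_group_ring_quotient (n : ℕ) (hn : 0 < n)
    (e : Polynomial ℤ ⧸ Ideal.span ({Polynomial.X ^ n - 1} : Set (Polynomial ℤ)))
    (he : e * e = e) :
    e = 0 ∨ e = 1 := by
  have hmonic : (X ^ n - 1 : Polynomial ℤ).Monic := by
    simpa using monic_X_pow_sub_C (1 : ℤ) hn.ne'
  let pb : PowerBasis ℤ (Polynomial ℤ ⧸ Ideal.span ({Polynomial.X ^ n - 1} : Set (Polynomial ℤ))) :=
    AdjoinRoot.powerBasis' hmonic
  have hdim : pb.dim = n := by
    show (X ^ n - 1 : Polynomial ℤ).natDegree = n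
    simpa using natDegree_X_pow_sub_C (n := n) (r := (1 : ℤ))
  have hpos : 0 < pb.dim := by rw [hdim]; exact hn
  have hgen : pb.gen ^ pb.dim = 1 := by
    have hroot : (AdjoinRoot.root (X ^ n - 1 : Polynomial ℤ)) ^ n = 1 := by
      have h := AdjoinRoot.mk_self (f := (X ^ n - 1 : Polynomial ℤ))
      rw [map_sub, map_pow, AdjoinRoot.mk_X, map_one, sub_eq_zero] at h
      exact h
    show (AdjoinRoot.root _) ^ pb.dim = 1
    rw [hdim]
    exact hroot
  have hone : pb.basis.repr 1 ⟨0, hpos⟩ = 1 := by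
    have h1 : pb.basis ⟨0, hpos⟩ = 1 := by rw [pb.basis_eq_pow]; simp
    rw [← h1, pb.basis.repr_self]
    simp
  rcases key_idem pb hpos hgen e he with h | h
  · left; exact h
  have he' : (1 - e) * (1 - e) = 1 - e := by
    rw [show (1 - e) * (1 - e) = 1 - e - e + e * e by ring, he]; ring
  rcases key_idem pb hpos hgen (1 - e) he' with h' | h'
  · right; exact (sub_eq_zero.mp h').symm
  · exfalso
    rw [map_sub, Finsupp.sub_apply, hone, h] at h'
    simp at h'
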